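/- Let ϖ > 0 and θ ≥ 0, and set C = max{1, 2^(θ−1)}. If f and g belong to B_ϖ^θ, then the pointwise product fg belongs to B_ϖ^θ and ‖fg‖_{ϖ,θ} ≤ 2C ‖f‖_{ϖ,θ} ‖g‖_{ϖ,θ}. -/

import Mathlib

open MeasureTheory
open scoped ENNReal

noncomputable section

instance : Fact (0 < 2 * Real.pi) := ⟨by positivity⟩

/-- The norm `‖h‖_{ϖ,θ} = Σ_{k∈ℤ} (1 + |k|^θ) sup_{t∈[0,∞)} e^(ϖ t |k|) |ĥ(k, t)|`
of the space `B_ϖ^θ`, valued in `ℝ≥0∞`. -/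
def wienerNorm (ϖ θ : ℝ) (h : ℝ → AddCircle (2 * Real.pi) → ℂ) : ℝ≥0∞ :=
  ∑' k : ℤ, ENNReal.ofReal (1 + (|k| : ℝ) ^ θ) *
    ⨆ t : {t : ℝ // 0 ≤ t},
      ENNReal.ofReal (Real.exp (ϖ * (t : ℝ) * (|k| : ℝ)) * ‖fourierCoeff (h (t : ℝ)) k‖)


open MeasureTheory AddCircle
open scoped NNReal

namespace Stmt7Aux


local notation "𝕊" => AddCircle (2 * Real.pi)

lemma contMap_integrable (c : C(𝕊, ℂ)) : Integrable ⇑c haarAddCircle := by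
  exact (BoundedContinuousFunction.mkOfCompact c).integrable (μ := haarAddCircle)

lemma norm_fourier_apply_le (n : ℤ) (x : 𝕊) : ‖fourier n x‖ ≤ 1 := by
  simpa [fourier_norm] using ContinuousMap.norm_coe_le_norm (fourier (T := 2 * Real.pi) n) x

lemma mul_cont_integrable {h : 𝕊 → ℂ} (hi : Integrable h haarAddCircle) (c : C(𝕊, ℂ)) :
    Integrable (fun x => c x * h x) haarAddCircle :=
  hi.bdd_mul c.continuous.aestronglyMeasurable
    (c := ‖c‖) (ae_of_all _ fun x => ContinuousMap.norm_coe_le_norm c x)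

lemma fourier_smul_integrable {h : 𝕊 → ℂ} (hi : Integrable h haarAddCircle) (n : ℤ) :
    Integrable (fun x => fourier n x • h x) haarAddCircle := by
  simpa [smul_eq_mul] using mul_cont_integrable hi (fourier n)

/-- Pairing with an integrable function, as a continuous linear functional on `C(𝕊, ℂ)`. -/
def pairing {h : 𝕊 → ℂ} (hi : Integrable h haarAddCircle) : C(𝕊, ℂ) →L[ℂ] ℂ :=
  LinearMap.mkContinuous
    { toFun := fun c => ∫ x, c x * h x ∂haarAddCircle
      map_add' := fun c d => by
        simp only [ContinuousMap.add_apply, add_mul]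
        exact integral_add (mul_cont_integrable hi c) (mul_cont_integrable hi d)
      map_smul' := fun a c => by
        simp only [ContinuousMap.smul_apply, smul_eq_mul, mul_assoc, RingHom.id_apply]
        rw [integral_const_mul] }
    (∫ x, ‖h x‖ ∂haarAddCircle)
    (by
      intro c
      simp only [LinearMap.coe_mk, AddHom.coe_mk]
      calc ‖∫ x, c x * h x ∂haarAddCircle‖ ≤ ∫ x, ‖c x * h x‖ ∂haarAddCircle :=
            norm_integral_le_integral_norm _
        _ ≤ ∫ x, ‖c‖ * ‖h x‖ ∂haarAddCircle := by
            refine integral_mono (mul_cont_integrable hi c).norm (hi.norm.const_mul _) ?_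
            intro x
            simp only [norm_mul]
            exact mul_le_mul_of_nonneg_right (ContinuousMap.norm_coe_le_norm c x) (norm_nonneg _)
        _ = (∫ x, ‖h x‖ ∂haarAddCircle) * ‖c‖ := by rw [integral_const_mul]; ring)

lemma pairing_apply {h : 𝕊 → ℂ} (hi : Integrable h haarAddCircle) (c : C(𝕊, ℂ)) :
    pairing hi c = ∫ x, c x * h x ∂haarAddCircle := rfl

lemma pairing_fourier_eq_fourierCoeff (n : ℤ) (c : C(𝕊, ℂ)) :
    pairing (contMap_integrable (fourier (-n))) c = fourierCoeff (⇑c) n := by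
  rw [pairing_apply, fourierCoeff]
  congr 1
  ext x
  simp [smul_eq_mul, mul_comm]

lemma pairing_eq_zero_of_fourierCoeff_eq_zero {h : 𝕊 → ℂ} (hi : Integrable h haarAddCircle)
    (h0 : ∀ n : ℤ, fourierCoeff h n = 0) (c : C(𝕊, ℂ)) : pairing hi c = 0 := by
  have hker : (Submodule.span ℂ (Set.range (fourier (T := 2 * Real.pi)))).topologicalClosure ≤
      (pairing hi).ker := by
    apply Submodule.topologicalClosure_minimal
    · rw [Submodule.span_le]
      rintro _ ⟨m, rfl⟩
      simp only [SetLike.mem_coe, LinearMap.mem_ker, ContinuousLinearMap.coe_coe]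
      rw [pairing_apply]
      have : (∫ x, fourier m x * h x ∂haarAddCircle) = fourierCoeff h (-m) := by
        rw [fourierCoeff]
        congr 1
        ext x
        simp [smul_eq_mul]
      rw [this, h0]
    · exact ContinuousLinearMap.isClosed_ker (pairing hi)
  have : c ∈ (pairing hi).ker := by
    apply hker
    rw [span_fourier_closure_eq_top]
    trivial
  exact this


lemma ae_eq_zero_of_fourierCoeff_eq_zero {h : 𝕊 → ℂ} (hi : Integrable h haarAddCircle)
    (h0 : ∀ n : ℤ, fourierCoeff h n = 0) : h =ᵐ[haarAddCircle] 0 := by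
  have hcont : ∀ c : C(𝕊, ℂ), ∫ x, c x * h x ∂haarAddCircle = 0 := fun c => by
    have := pairing_eq_zero_of_fourierCoeff_eq_zero hi h0 c
    rwa [pairing_apply] at this
  apply ae_eq_zero_of_forall_setIntegral_isClosed_eq_zero hi
  intro s hs
  have δpos : ∀ n : ℕ, 0 < 1 / ((n : ℝ) + 1) := fun n => by positivity
  have δlim : Filter.Tendsto (fun n : ℕ => 1 / ((n : ℝ) + 1)) Filter.atTop (nhds 0) :=
    tendsto_one_div_add_atTop_nhds_zero_nat
  have hptw := thickenedIndicator_tendsto_indicator_closure δpos δlim s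
  rw [tendsto_pi_nhds] at hptw
  set F : ℕ → 𝕊 → ℂ := fun n x => ((thickenedIndicator (δpos n) s x : ℝ) : ℂ) * h x with hF
  set G : 𝕊 → ℂ := fun x =>
    (Complex.ofReal ∘ NNReal.toReal) (Set.indicator (closure s) (fun _ => (1 : ℝ≥0)) x) * h x
    with hG
  have hFint : ∀ n, ∫ x, F n x ∂haarAddCircle = 0 := by
    intro n
    exact hcont ⟨fun x => ((thickenedIndicator (δpos n) s x : ℝ) : ℂ),
      Complex.continuous_ofReal.comp (NNReal.continuous_coe.comp
        (thickenedIndicator (δpos n) s).continuous)⟩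
  have hmeas : ∀ n, AEStronglyMeasurable (F n) haarAddCircle := by
    intro n
    exact (Complex.continuous_ofReal.comp (NNReal.continuous_coe.comp
      (thickenedIndicator (δpos n) s).continuous)).aestronglyMeasurable.mul
      hi.aestronglyMeasurable
  have hbound : ∀ n, ∀ᵐ x ∂haarAddCircle, ‖F n x‖ ≤ ‖h x‖ := by
    intro n
    filter_upwards with x
    have h1 : (thickenedIndicator (δpos n) s x : ℝ) ≤ 1 := by
      exact_mod_cast thickenedIndicator_le_one (δpos n) s x
    have h2 : (0 : ℝ) ≤ (thickenedIndicator (δpos n) s x : ℝ) := (thickenedIndicator (δpos n) s x).2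
    simp only [hF, norm_mul, Complex.norm_real, Real.norm_eq_abs, abs_of_nonneg h2]
    nlinarith [norm_nonneg (h x)]
  have hptlim : ∀ᵐ x ∂haarAddCircle, Filter.Tendsto (fun n => F n x) Filter.atTop (nhds (G x)) := by
    filter_upwards with x
    exact ((((Complex.continuous_ofReal.comp NNReal.continuous_coe).tendsto _).comp
      (hptw x)).mul_const (h x))
  have hlim := tendsto_integral_of_dominated_convergence (fun x => ‖h x‖) hmeas hi.norm hbound hptlim
  have hGint : ∫ x, G x ∂haarAddCircle = ∫ x in s, h x ∂haarAddCircle := by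
    rw [← integral_indicator hs.measurableSet]
    congr 1
    ext x
    by_cases hx : x ∈ s <;> simp [hG, hx, hs.closure_eq, Function.comp]
  simp only [hFint] at hlim
  rw [hGint] at hlim
  exact (tendsto_nhds_unique tendsto_const_nhds hlim).symm ▸ rfl


lemma fourierCoeff_sub {u v : 𝕊 → ℂ} (hu : Integrable u haarAddCircle)
    (hv : Integrable v haarAddCircle) (n : ℤ) :
    fourierCoeff (u - v) n = fourierCoeff u n - fourierCoeff v n := by
  simp only [fourierCoeff, Pi.sub_apply, smul_sub]
  exact integral_sub (fourier_smul_integrable hu (-n)) (fourier_smul_integrable hv (-n))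

lemma fourierCoeff_fourier (m n : ℤ) :
    fourierCoeff (⇑(fourier m) : 𝕊 → ℂ) n = if m = n then 1 else 0 := by
  simp only [fourierCoeff, smul_eq_mul, ← fourier_add]
  split_ifs with hmn
  · subst hmn
    have h1 : ∀ x : 𝕊, fourier (-m + m) x = (1 : ℂ) := by
      intro x; rw [neg_add_cancel]; exact fourier_zero
    simp only [h1]
    simp
  · have hij : -n + m ≠ 0 := by
      intro H
      exact hmn (by omega)
    convert integral_eq_zero_of_add_right_eq_neg (μ := haarAddCircle)
      (fourier_add_half_inv_index hij (by positivity : (0:ℝ) < 2 * Real.pi))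

lemma exists_continuous_rep {u : 𝕊 → ℂ} (hu : Integrable u haarAddCircle)
    (hsu : Summable fun n => ‖fourierCoeff u n‖) :
    ∃ U : C(𝕊, ℂ), (∀ n, fourierCoeff (⇑U) n = fourierCoeff u n) ∧ u =ᵐ[haarAddCircle] ⇑U := by
  have hsum : Summable (fun k : ℤ => fourierCoeff u k • (fourier k : C(𝕊, ℂ))) := by
    apply Summable.of_norm
    simpa [norm_smul, fourier_norm] using hsu
  set U : C(𝕊, ℂ) := ∑' k : ℤ, fourierCoeff u k • (fourier k : C(𝕊, ℂ)) with hU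
  have hUc : ∀ n, fourierCoeff (⇑U) n = fourierCoeff u n := by
    intro n
    rw [← pairing_fourier_eq_fourierCoeff n U, hU,
      ContinuousLinearMap.map_tsum _ hsum]
    have heach : ∀ k : ℤ, pairing (contMap_integrable (fourier (-n)))
        (fourierCoeff u k • (fourier k : C(𝕊, ℂ)))
        = fourierCoeff u k * (if k = n then 1 else 0) := by
      intro k
      rw [_root_.map_smul, smul_eq_mul, pairing_fourier_eq_fourierCoeff n (fourier k),
        fourierCoeff_fourier]
    rw [tsum_congr heach, tsum_eq_single n (fun k hk => by rw [if_neg hk, mul_zero])]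
    rw [if_pos rfl, mul_one]
  have hker : ∀ n, fourierCoeff (u - ⇑U) n = 0 := by
    intro n
    rw [fourierCoeff_sub hu (contMap_integrable U), hUc, sub_self]
  have h0 := ae_eq_zero_of_fourierCoeff_eq_zero (hu.sub (contMap_integrable U)) hker
  refine ⟨U, hUc, ?_⟩
  filter_upwards [h0] with x hx
  have hx' : u x - U x = 0 := hx
  exact sub_eq_zero.mp hx'


lemma fourierCoeff_mul_fourier (U : C(𝕊, ℂ)) (j n : ℤ) :
    fourierCoeff (⇑(U * fourier j : C(𝕊, ℂ))) n = fourierCoeff (⇑U) (n - j) := by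
  simp only [fourierCoeff]
  have h : (fun x : 𝕊 => fourier (-n) x • (U * fourier j : C(𝕊, ℂ)) x)
      = fun x : 𝕊 => fourier (-(n - j)) x • U x := by
    ext x
    simp only [ContinuousMap.mul_apply, smul_eq_mul,
      show -(n - j) = -n + j from by ring, fourier_add]
    ring
  rw [h]

lemma hasSum_fourierCoeff_mul_cont (U V : C(𝕊, ℂ))
    (hV : Summable (fourierCoeff (⇑V))) (n : ℤ) :
    HasSum (fun j : ℤ => fourierCoeff (⇑V) j * fourierCoeff (⇑U) (n - j))
      (fourierCoeff (fun x => U x * V x) n) := by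
  have hVsum : HasSum (fun j : ℤ => fourierCoeff (⇑V) j • (fourier j : C(𝕊, ℂ))) V :=
    hasSum_fourier_series_of_summable hV
  have hmul : HasSum (fun j : ℤ => fourierCoeff (⇑V) j • (U * fourier j)) (U * V) := by
    have h2 := hVsum.mapL (ContinuousLinearMap.mul ℂ C(𝕊, ℂ) U)
    simpa [ContinuousLinearMap.mul_apply', mul_smul_comm] using h2
  have h3 := hmul.mapL (pairing (contMap_integrable (fourier (-n))))
  simp only [_root_.map_smul, smul_eq_mul, pairing_fourier_eq_fourierCoeff,
    fourierCoeff_mul_fourier] at h3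
  have hUV : (fun x : 𝕊 => U x * V x) = ⇑(U * V) := rfl
  rw [hUV]
  exact h3

lemma hasSum_fourierCoeff_mul {u v : 𝕊 → ℂ} (hu : Integrable u haarAddCircle)
    (hv : Integrable v haarAddCircle) (hsu : Summable fun j => ‖fourierCoeff u j‖)
    (hsv : Summable fun j => ‖fourierCoeff v j‖) (n : ℤ) :
    HasSum (fun j : ℤ => fourierCoeff v j * fourierCoeff u (n - j))
      (fourierCoeff (fun x => u x * v x) n) := by
  obtain ⟨U, hUc, hUe⟩ := exists_continuous_rep hu hsu
  obtain ⟨V, hVc, hVe⟩ := exists_continuous_rep hv hsv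
  have hcoeff : fourierCoeff (fun x => u x * v x) n = fourierCoeff (fun x => U x * V x) n := by
    simp only [fourierCoeff]
    apply integral_congr_ae
    filter_upwards [hUe, hVe] with x h1 h2
    rw [h1, h2]
  rw [hcoeff]
  have hVs : Summable (fourierCoeff (⇑V)) := by
    apply Summable.of_norm
    have : (fun j => ‖fourierCoeff (⇑V) j‖) = fun j => ‖fourierCoeff v j‖ := by
      funext j; rw [hVc]
    rw [this]
    exact hsv
  have := hasSum_fourierCoeff_mul_cont U V hVs n
  have heq : (fun j : ℤ => fourierCoeff (⇑V) j * fourierCoeff (⇑U) (n - j))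
      = fun j : ℤ => fourierCoeff v j * fourierCoeff u (n - j) := by
    funext j; rw [hVc, hUc]
  rwa [heq] at this


lemma weight_ineq {θ : ℝ} (hθ : 0 ≤ θ) (a b : ℝ) (ha : 0 ≤ a) (hb : 0 ≤ b) :
    (a + b) ^ θ ≤ max 1 ((2:ℝ) ^ (θ - 1)) * (a ^ θ + b ^ θ) := by
  have hx : ((a.toNNReal : ℝ)) = a := Real.coe_toNNReal a ha
  have hy : ((b.toNNReal : ℝ)) = b := Real.coe_toNNReal b hb
  rcases le_total θ 1 with h1 | h1
  · have h := NNReal.rpow_add_le_add_rpow a.toNNReal b.toNNReal hθ h1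
    have h' := NNReal.coe_le_coe.2 h
    push_cast at h'
    rw [hx, hy] at h'
    have hnn : 0 ≤ a ^ θ + b ^ θ := by positivity
    calc (a + b) ^ θ ≤ a ^ θ + b ^ θ := h'
      _ ≤ max 1 ((2:ℝ) ^ (θ - 1)) * (a ^ θ + b ^ θ) :=
        le_mul_of_one_le_left hnn (le_max_left _ _)
  · have h := NNReal.rpow_add_le_mul_rpow_add_rpow a.toNNReal b.toNNReal h1
    have h' := NNReal.coe_le_coe.2 h
    push_cast at h'
    rw [hx, hy] at h'
    have hnn : 0 ≤ a ^ θ + b ^ θ := by positivity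
    calc (a + b) ^ θ ≤ (2:ℝ) ^ (θ - 1) * (a ^ θ + b ^ θ) := h'
      _ ≤ max 1 ((2:ℝ) ^ (θ - 1)) * (a ^ θ + b ^ θ) :=
        mul_le_mul_of_nonneg_right (le_max_right _ _) hnn

lemma ofReal_norm_tsum_le (a : ℤ → ℂ) :
    ENNReal.ofReal ‖∑' i, a i‖ ≤ ∑' i, ENNReal.ofReal ‖a i‖ := by
  by_cases h : Summable (fun i => ‖a i‖)
  · calc ENNReal.ofReal ‖∑' i, a i‖ ≤ ENNReal.ofReal (∑' i, ‖a i‖) :=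
        ENNReal.ofReal_le_ofReal (norm_tsum_le_tsum_norm h)
    _ = ∑' i, ENNReal.ofReal ‖a i‖ :=
        ENNReal.ofReal_tsum_of_nonneg (fun i => norm_nonneg _) h
  · rw [tsum_eq_zero_of_not_summable (fun hs => h (summable_norm_iff.mpr hs))]
    simp

lemma integrable_haar {u : 𝕊 → ℂ} (hu : Integrable u volume) : Integrable u haarAddCircle := by
  have h1 : (volume : Measure 𝕊) = ENNReal.ofReal (2 * Real.pi) • haarAddCircle :=
    volume_eq_smul_haarAddCircle
  rw [h1] at hu
  have hne : ENNReal.ofReal (2 * Real.pi) ≠ 0 :=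
    (ENNReal.ofReal_pos.2 (by positivity)).ne'
  exact (integrable_smul_measure hne ENNReal.ofReal_ne_top).mp hu

/-- The weight `(1 + |k|^θ)` as an extended real. -/
def W (θ : ℝ) (k : ℤ) : ℝ≥0∞ := ENNReal.ofReal (1 + |(k : ℝ)| ^ θ)

/-- The weighted supremum over time of the `k`-th Fourier coefficient. -/
def S (ϖ : ℝ) (h : ℝ → 𝕊 → ℂ) (k : ℤ) : ℝ≥0∞ :=
  ⨆ t : {t : ℝ // 0 ≤ t},
    ENNReal.ofReal (Real.exp (ϖ * (t : ℝ) * |(k : ℝ)|) * ‖fourierCoeff (h (t : ℝ)) k‖)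

lemma wienerNorm_eq (ϖ θ : ℝ) (h : ℝ → 𝕊 → ℂ) :
    wienerNorm ϖ θ h = ∑' k : ℤ, W θ k * S ϖ h k := rfl

lemma one_le_W (θ : ℝ) (k : ℤ) : 1 ≤ W θ k := by
  rw [W, ← ENNReal.ofReal_one]
  exact ENNReal.ofReal_le_ofReal (by nlinarith [Real.rpow_nonneg (abs_nonneg ((k : ℝ))) θ])

lemma summable_coeff {ϖ θ : ℝ} (hϖ : 0 < ϖ) {h : ℝ → 𝕊 → ℂ}
    (hW : wienerNorm ϖ θ h ≠ ⊤) {t : ℝ} (ht : 0 ≤ t) :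
    Summable fun k : ℤ => ‖fourierCoeff (h t) k‖ := by
  have hterm : ∀ k : ℤ, ENNReal.ofReal ‖fourierCoeff (h t) k‖ ≤ W θ k * S ϖ h k := by
    intro k
    have h1 : ENNReal.ofReal ‖fourierCoeff (h t) k‖
        ≤ ENNReal.ofReal (Real.exp (ϖ * t * |(k : ℝ)|) * ‖fourierCoeff (h t) k‖) := by
      apply ENNReal.ofReal_le_ofReal
      nlinarith [Real.one_le_exp (show 0 ≤ ϖ * t * |(k : ℝ)| by positivity),
        norm_nonneg (fourierCoeff (h t) k)]
    have h2 : ENNReal.ofReal (Real.exp (ϖ * t * |(k : ℝ)|) * ‖fourierCoeff (h t) k‖)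
        ≤ S ϖ h k :=
      le_iSup (fun t' : {t : ℝ // 0 ≤ t} =>
        ENNReal.ofReal (Real.exp (ϖ * (t' : ℝ) * |(k : ℝ)|) * ‖fourierCoeff (h (t' : ℝ)) k‖))
        (⟨t, ht⟩ : {t : ℝ // 0 ≤ t})
    have h3 : S ϖ h k ≤ W θ k * S ϖ h k := by
      calc S ϖ h k = 1 * S ϖ h k := (one_mul _).symm
        _ ≤ W θ k * S ϖ h k := mul_le_mul_left (one_le_W θ k) _
    exact le_trans h1 (le_trans h2 h3)
  have hfin : (∑' k : ℤ, ENNReal.ofReal ‖fourierCoeff (h t) k‖) ≠ ⊤ := by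
    refine ne_top_of_le_ne_top ?_ (ENNReal.tsum_le_tsum hterm)
    rw [← wienerNorm_eq]
    exact hW
  have := ENNReal.summable_toReal hfin
  simpa [ENNReal.toReal_ofReal (norm_nonneg _)] using this

lemma key_bound {ϖ θ : ℝ} (hϖ : 0 < ϖ) (hθ : 0 ≤ θ) {f g : ℝ → 𝕊 → ℂ}
    (hf : ∀ t : ℝ, 0 ≤ t → Integrable (f t) volume)
    (hg : ∀ t : ℝ, 0 ≤ t → Integrable (g t) volume)
    (hfW : wienerNorm ϖ θ f ≠ ⊤) (hgW : wienerNorm ϖ θ g ≠ ⊤) (k : ℤ) :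
    W θ k * S ϖ (fun t x => f t x * g t x) k
      ≤ ∑' j : ℤ, ENNReal.ofReal (2 * max 1 ((2 : ℝ) ^ (θ - 1)))
          * (W θ (k - j) * S ϖ f (k - j)) * (W θ j * S ϖ g j) := by
  rw [S, ENNReal.mul_iSup]
  refine iSup_le ?_
  rintro ⟨t, ht⟩
  have hfint : Integrable (f t) haarAddCircle := integrable_haar (hf t ht)
  have hgint : Integrable (g t) haarAddCircle := integrable_haar (hg t ht)
  have hfsum : Summable fun j : ℤ => ‖fourierCoeff (f t) j‖ := summable_coeff hϖ hfW ht
  have hgsum : Summable fun j : ℤ => ‖fourierCoeff (g t) j‖ := summable_coeff hϖ hgW ht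
  have hconv := hasSum_fourierCoeff_mul hfint hgint hfsum hgsum k
  have hcoeff : fourierCoeff (fun x => f t x * g t x) k
      = ∑' j : ℤ, fourierCoeff (g t) j * fourierCoeff (f t) (k - j) := hconv.tsum_eq.symm
  show W θ k * ENNReal.ofReal (Real.exp (ϖ * t * |(k : ℝ)|) *
      ‖fourierCoeff (fun x => f t x * g t x) k‖) ≤ _
  rw [hcoeff, ENNReal.ofReal_mul (Real.exp_nonneg _)]
  have hC1 : (1 : ℝ) ≤ max 1 ((2 : ℝ) ^ (θ - 1)) := le_max_left _ _
  calc W θ k * (ENNReal.ofReal (Real.exp (ϖ * t * |(k : ℝ)|)) *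
        ENNReal.ofReal ‖∑' j : ℤ, fourierCoeff (g t) j * fourierCoeff (f t) (k - j)‖)
      ≤ W θ k * (ENNReal.ofReal (Real.exp (ϖ * t * |(k : ℝ)|)) *
        ∑' j : ℤ, ENNReal.ofReal ‖fourierCoeff (g t) j * fourierCoeff (f t) (k - j)‖) :=
        mul_le_mul_right (mul_le_mul_right (ofReal_norm_tsum_le _) _) _
    _ = ∑' j : ℤ, W θ k * (ENNReal.ofReal (Real.exp (ϖ * t * |(k : ℝ)|)) *
        ENNReal.ofReal ‖fourierCoeff (g t) j * fourierCoeff (f t) (k - j)‖) := by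
        rw [ENNReal.tsum_mul_left, ENNReal.tsum_mul_left]
    _ ≤ ∑' j : ℤ, ENNReal.ofReal (2 * max 1 ((2 : ℝ) ^ (θ - 1)))
          * (W θ (k - j) * S ϖ f (k - j)) * (W θ j * S ϖ g j) := by
        refine ENNReal.tsum_le_tsum ?_
        intro j
        have ha0 : (0 : ℝ) ≤ |((k - j : ℤ) : ℝ)| := abs_nonneg _
        have hb0 : (0 : ℝ) ≤ |((j : ℤ) : ℝ)| := abs_nonneg _
        have ha' : (0 : ℝ) ≤ |((k - j : ℤ) : ℝ)| ^ θ := Real.rpow_nonneg ha0 θ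
        have hb' : (0 : ℝ) ≤ |((j : ℤ) : ℝ)| ^ θ := Real.rpow_nonneg hb0 θ
        have habs : |(k : ℝ)| ≤ |((k - j : ℤ) : ℝ)| + |((j : ℤ) : ℝ)| := by
          push_cast
          calc |(k : ℝ)| = |((k : ℝ) - (j : ℝ)) + (j : ℝ)| := by rw [sub_add_cancel]
            _ ≤ |(k : ℝ) - (j : ℝ)| + |(j : ℝ)| := abs_add_le _ _
        have hE : Real.exp (ϖ * t * |(k : ℝ)|)
            ≤ Real.exp (ϖ * t * |((k - j : ℤ) : ℝ)|) * Real.exp (ϖ * t * |((j : ℤ) : ℝ)|) := by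
          rw [← Real.exp_add]
          apply Real.exp_le_exp.2
          have h0 : (0 : ℝ) ≤ ϖ * t := by positivity
          nlinarith [mul_le_mul_of_nonneg_left habs h0]
        have hw2 : 1 + |(k : ℝ)| ^ θ ≤ 2 * max 1 ((2 : ℝ) ^ (θ - 1)) *
            ((1 + |((k - j : ℤ) : ℝ)| ^ θ) * (1 + |((j : ℤ) : ℝ)| ^ θ)) := by
          have h1 : |(k : ℝ)| ^ θ ≤ (|((k - j : ℤ) : ℝ)| + |((j : ℤ) : ℝ)|) ^ θ :=
            Real.rpow_le_rpow (abs_nonneg _) habs hθ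
          have h2 := weight_ineq hθ _ _ ha0 hb0
          nlinarith [mul_nonneg ha' hb']
        have hreal : (1 + |(k : ℝ)| ^ θ) * (Real.exp (ϖ * t * |(k : ℝ)|) *
              ‖fourierCoeff (g t) j * fourierCoeff (f t) (k - j)‖)
            ≤ 2 * max 1 ((2 : ℝ) ^ (θ - 1)) *
              ((1 + |((k - j : ℤ) : ℝ)| ^ θ) *
                (Real.exp (ϖ * t * |((k - j : ℤ) : ℝ)|) * ‖fourierCoeff (f t) (k - j)‖)) *
              ((1 + |((j : ℤ) : ℝ)| ^ θ) *
                (Real.exp (ϖ * t * |((j : ℤ) : ℝ)|) * ‖fourierCoeff (g t) j‖)) := by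
          have hprod : (1 + |(k : ℝ)| ^ θ) * Real.exp (ϖ * t * |(k : ℝ)|)
              ≤ (2 * max 1 ((2 : ℝ) ^ (θ - 1)) *
                  ((1 + |((k - j : ℤ) : ℝ)| ^ θ) * (1 + |((j : ℤ) : ℝ)| ^ θ))) *
                (Real.exp (ϖ * t * |((k - j : ℤ) : ℝ)|) *
                  Real.exp (ϖ * t * |((j : ℤ) : ℝ)|)) := by
            apply mul_le_mul hw2 hE (Real.exp_nonneg _)
            nlinarith [mul_nonneg (mul_nonneg (le_of_lt (lt_of_lt_of_le one_pos hC1))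
              (by nlinarith : (0:ℝ) ≤ 1 + |((k - j : ℤ) : ℝ)| ^ θ))
              (by nlinarith : (0:ℝ) ≤ 1 + |((j : ℤ) : ℝ)| ^ θ)]
          calc (1 + |(k : ℝ)| ^ θ) * (Real.exp (ϖ * t * |(k : ℝ)|) *
                ‖fourierCoeff (g t) j * fourierCoeff (f t) (k - j)‖)
              = ((1 + |(k : ℝ)| ^ θ) * Real.exp (ϖ * t * |(k : ℝ)|)) *
                (‖fourierCoeff (f t) (k - j)‖ * ‖fourierCoeff (g t) j‖) := by
                rw [norm_mul]; ring
            _ ≤ ((2 * max 1 ((2 : ℝ) ^ (θ - 1)) *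
                  ((1 + |((k - j : ℤ) : ℝ)| ^ θ) * (1 + |((j : ℤ) : ℝ)| ^ θ))) *
                (Real.exp (ϖ * t * |((k - j : ℤ) : ℝ)|) *
                  Real.exp (ϖ * t * |((j : ℤ) : ℝ)|))) *
                (‖fourierCoeff (f t) (k - j)‖ * ‖fourierCoeff (g t) j‖) := by
                apply mul_le_mul_of_nonneg_right hprod
                positivity
            _ = _ := by ring
        have hSfle : ENNReal.ofReal (Real.exp (ϖ * t * |((k - j : ℤ) : ℝ)|) *
              ‖fourierCoeff (f t) (k - j)‖) ≤ S ϖ f (k - j) :=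
          le_iSup (fun t' : {t : ℝ // 0 ≤ t} =>
            ENNReal.ofReal (Real.exp (ϖ * (t' : ℝ) * |((k - j : ℤ) : ℝ)|) *
              ‖fourierCoeff (f (t' : ℝ)) (k - j)‖)) (⟨t, ht⟩ : {t : ℝ // 0 ≤ t})
        have hSgle : ENNReal.ofReal (Real.exp (ϖ * t * |((j : ℤ) : ℝ)|) *
              ‖fourierCoeff (g t) j‖) ≤ S ϖ g j :=
          le_iSup (fun t' : {t : ℝ // 0 ≤ t} =>
            ENNReal.ofReal (Real.exp (ϖ * (t' : ℝ) * |((j : ℤ) : ℝ)|) *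
              ‖fourierCoeff (g (t' : ℝ)) j‖)) (⟨t, ht⟩ : {t : ℝ // 0 ≤ t})
        calc W θ k * (ENNReal.ofReal (Real.exp (ϖ * t * |(k : ℝ)|)) *
              ENNReal.ofReal ‖fourierCoeff (g t) j * fourierCoeff (f t) (k - j)‖)
            = ENNReal.ofReal ((1 + |(k : ℝ)| ^ θ) * (Real.exp (ϖ * t * |(k : ℝ)|) *
                ‖fourierCoeff (g t) j * fourierCoeff (f t) (k - j)‖)) := by
              rw [W, ← ENNReal.ofReal_mul (Real.exp_nonneg _),
                ← ENNReal.ofReal_mul (by positivity)]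
          _ ≤ ENNReal.ofReal (2 * max 1 ((2 : ℝ) ^ (θ - 1)) *
                ((1 + |((k - j : ℤ) : ℝ)| ^ θ) *
                  (Real.exp (ϖ * t * |((k - j : ℤ) : ℝ)|) * ‖fourierCoeff (f t) (k - j)‖)) *
                ((1 + |((j : ℤ) : ℝ)| ^ θ) *
                  (Real.exp (ϖ * t * |((j : ℤ) : ℝ)|) * ‖fourierCoeff (g t) j‖))) :=
              ENNReal.ofReal_le_ofReal hreal
          _ = ENNReal.ofReal (2 * max 1 ((2 : ℝ) ^ (θ - 1)))
                * (ENNReal.ofReal (1 + |((k - j : ℤ) : ℝ)| ^ θ) *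
                    ENNReal.ofReal (Real.exp (ϖ * t * |((k - j : ℤ) : ℝ)|) *
                      ‖fourierCoeff (f t) (k - j)‖))
                * (ENNReal.ofReal (1 + |((j : ℤ) : ℝ)| ^ θ) *
                    ENNReal.ofReal (Real.exp (ϖ * t * |((j : ℤ) : ℝ)|) *
                      ‖fourierCoeff (g t) j‖)) := by
              rw [ENNReal.ofReal_mul (by positivity : (0:ℝ) ≤ 2 * max 1 ((2 : ℝ) ^ (θ - 1)) *
                  ((1 + |((k - j : ℤ) : ℝ)| ^ θ) *
                    (Real.exp (ϖ * t * |((k - j : ℤ) : ℝ)|) * ‖fourierCoeff (f t) (k - j)‖))),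
                ENNReal.ofReal_mul (by positivity : (0:ℝ) ≤ 2 * max 1 ((2 : ℝ) ^ (θ - 1))),
                ENNReal.ofReal_mul (by positivity : (0:ℝ) ≤ 1 + |((k - j : ℤ) : ℝ)| ^ θ),
                ENNReal.ofReal_mul (by positivity : (0:ℝ) ≤ 1 + |((j : ℤ) : ℝ)| ^ θ)]
          _ ≤ ENNReal.ofReal (2 * max 1 ((2 : ℝ) ^ (θ - 1)))
                * (W θ (k - j) * S ϖ f (k - j)) * (W θ j * S ϖ g j) := by
              refine mul_le_mul' (mul_le_mul' le_rfl (mul_le_mul' le_rfl hSfle))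
                (mul_le_mul' le_rfl hSgle)

end Stmt7Aux

open Stmt7Aux in
/-- `B_ϖ^θ` is a Banach algebra: for `ϖ > 0`, `θ ≥ 0` and `C = max{1, 2^(θ−1)}`, if `f` and `g`
belong to `B_ϖ^θ` then the pointwise product `fg` belongs to `B_ϖ^θ` and
`‖fg‖_{ϖ,θ} ≤ 2C ‖f‖_{ϖ,θ} ‖g‖_{ϖ,θ}`. -/
theorem stmt7 (ϖ θ : ℝ) (hϖ : 0 < ϖ) (hθ : 0 ≤ θ)
    (f g : ℝ → AddCircle (2 * Real.pi) → ℂ)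
    (hf : ∀ t : ℝ, 0 ≤ t → Integrable (f t) volume)
    (hg : ∀ t : ℝ, 0 ≤ t → Integrable (g t) volume)
    (hfW : wienerNorm ϖ θ f ≠ ⊤) (hgW : wienerNorm ϖ θ g ≠ ⊤) :
    wienerNorm ϖ θ (fun t x => f t x * g t x) ≤
        ENNReal.ofReal (2 * max 1 ((2 : ℝ) ^ (θ - 1))) * wienerNorm ϖ θ f * wienerNorm ϖ θ g ∧
      wienerNorm ϖ θ (fun t x => f t x * g t x) ≠ ⊤ := by
  have hmain : wienerNorm ϖ θ (fun t x => f t x * g t x) ≤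
      ENNReal.ofReal (2 * max 1 ((2 : ℝ) ^ (θ - 1))) * wienerNorm ϖ θ f * wienerNorm ϖ θ g := by
    calc wienerNorm ϖ θ (fun t x => f t x * g t x)
        = ∑' k : ℤ, W θ k * S ϖ (fun t x => f t x * g t x) k := wienerNorm_eq ϖ θ _
      _ ≤ ∑' k : ℤ, ∑' j : ℤ, ENNReal.ofReal (2 * max 1 ((2 : ℝ) ^ (θ - 1)))
            * (W θ (k - j) * S ϖ f (k - j)) * (W θ j * S ϖ g j) :=
          ENNReal.tsum_le_tsum (fun k => key_bound hϖ hθ hf hg hfW hgW k)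
      _ = ∑' j : ℤ, ∑' k : ℤ, ENNReal.ofReal (2 * max 1 ((2 : ℝ) ^ (θ - 1)))
            * (W θ (k - j) * S ϖ f (k - j)) * (W θ j * S ϖ g j) := ENNReal.tsum_comm
      _ = ∑' j : ℤ, (ENNReal.ofReal (2 * max 1 ((2 : ℝ) ^ (θ - 1))) * (W θ j * S ϖ g j))
            * ∑' m : ℤ, W θ m * S ϖ f m := by
          refine tsum_congr fun j => ?_
          calc ∑' k : ℤ, ENNReal.ofReal (2 * max 1 ((2 : ℝ) ^ (θ - 1)))
                * (W θ (k - j) * S ϖ f (k - j)) * (W θ j * S ϖ g j)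
              = ∑' k : ℤ, (ENNReal.ofReal (2 * max 1 ((2 : ℝ) ^ (θ - 1)))
                  * (W θ j * S ϖ g j)) * (W θ (k - j) * S ϖ f (k - j)) := by
                refine tsum_congr fun k => ?_
                ring
            _ = (ENNReal.ofReal (2 * max 1 ((2 : ℝ) ^ (θ - 1))) * (W θ j * S ϖ g j))
                * ∑' k : ℤ, W θ (k - j) * S ϖ f (k - j) := ENNReal.tsum_mul_left
            _ = _ := by
                congr 1
                exact (Equiv.subRight j).tsum_eq (fun m => W θ m * S ϖ f m)
      _ = ENNReal.ofReal (2 * max 1 ((2 : ℝ) ^ (θ - 1))) * wienerNorm ϖ θ f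
            * wienerNorm ϖ θ g := by
          rw [ENNReal.tsum_mul_right, ENNReal.tsum_mul_left, wienerNorm_eq ϖ θ f,
            wienerNorm_eq ϖ θ g]
          ring
  exact ⟨hmain, ne_top_of_le_ne_top
    (ENNReal.mul_ne_top (ENNReal.mul_ne_top ENNReal.ofReal_ne_top hfW) hgW) hmain⟩

end
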